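/- Let π be a D-ordering of Q, i.e., an enumeration q₁, q₂, …, q_{|Q|} of Q such that for each j, writing Q_j = {q_j, q_{j+1}, …, q_{|Q|}}, the slice sum d(Q_j, q_j) = min_{r ∈ Q_j} d(Q_j, r). Then there exists some j such that ρ(Q_j) ≥ ρ_opt / N, where ρ_opt is the maximum density over all nonempty subsets of Q. -/

import Mathlib

open Finset

variable {α β : Type*}

noncomputable def mass [DecidableEq α] (E : Finset β) (w : β → ℝ)
    (slices : β → Finset α) (S : Finset α) : ℝ :=
  ∑ e ∈ E.filter (fun e => slices e ⊆ S), w e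

noncomputable def sliceSum [DecidableEq α] (E : Finset β) (w : β → ℝ)
    (slices : β → Finset α) (S : Finset α) (q : α) : ℝ :=
  ∑ e ∈ E.filter (fun e => slices e ⊆ S ∧ q ∈ slices e), w e

noncomputable def density [DecidableEq α] (E : Finset β) (w : β → ℝ)
    (slices : β → Finset α) (S : Finset α) : ℝ :=
  mass E w slices S / S.card

def suffixSet [DecidableEq α] {m : ℕ} (π : Fin m → α) (j : Fin m) : Finset α :=
  (Finset.univ.filter (fun i => j ≤ i)).image π

def IsDOrdering [DecidableEq α] (E : Finset β) (w : β → ℝ)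
    (slices : β → Finset α) {m : ℕ} (π : Fin m → α) : Prop :=
  ∀ j : Fin m, ∀ r ∈ suffixSet π j,
    sliceSum E w slices (suffixSet π j) (π j) ≤ sliceSum E w slices (suffixSet π j) r

noncomputable def rhoOpt [DecidableEq α] (Q : Finset α) (E : Finset β) (w : β → ℝ)
    (slices : β → Finset α) : ℝ :=
  sSup {x | ∃ S, S ⊆ Q ∧ S.Nonempty ∧ x = density E w slices S}

noncomputable def dpi [DecidableEq α] (E : Finset β) (w : β → ℝ)
    (slices : β → Finset α) {m : ℕ} (π : Fin m → α) (i : Fin m) : ℝ :=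
  sliceSum E w slices (suffixSet π i) (π i)

noncomputable def cpi [DecidableEq α] (E : Finset β) (w : β → ℝ)
    (slices : β → Finset α) {m : ℕ} (π : Fin m → α) (i : Fin m) : ℝ :=
  (Finset.univ.filter (fun i' : Fin m => i' ≤ i)).sup' ⟨i, by simp⟩ (dpi E w slices π)

lemma handshake [DecidableEq α] (E : Finset β) (w : β → ℝ)
    (slices : β → Finset α) (N : ℕ) (hcard : ∀ e ∈ E, (slices e).card = N)
    (S : Finset α) :
    ∑ r ∈ S, sliceSum E w slices S r = N * mass E w slices S := by
  unfold sliceSum mass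
  simp only [Finset.sum_filter, Finset.mul_sum]
  rw [Finset.sum_comm]
  refine Finset.sum_congr rfl fun e he => ?_
  by_cases h : slices e ⊆ S
  · simp only [h, true_and, if_true]
    rw [Finset.sum_ite_mem, Finset.inter_eq_right.mpr h, Finset.sum_const,
      hcard e he, nsmul_eq_mul]
  · simp [h]

lemma sliceSum_mono [DecidableEq α] (E : Finset β) (w : β → ℝ)
    (slices : β → Finset α) (hw : ∀ e, 0 ≤ w e) {S T : Finset α} (hST : S ⊆ T) (q : α) :
    sliceSum E w slices S q ≤ sliceSum E w slices T q := by
  apply Finset.sum_le_sum_of_subset_of_nonneg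
  · refine Finset.monotone_filter_right _ ?_
    intro e he
    exact fun h => ⟨h.1.trans hST, h.2⟩
  · intro e _ _; exact hw e

lemma mass_split [DecidableEq α] (E : Finset β) (w : β → ℝ)
    (slices : β → Finset α) (S : Finset α) (q : α) :
    mass E w slices S
      = mass E w slices (S.erase q) + sliceSum E w slices S q := by
  unfold mass sliceSum
  rw [add_comm, ← Finset.sum_filter_add_sum_filter_not (E.filter (fun e => slices e ⊆ S))
    (fun e => q ∈ slices e), Finset.filter_filter, Finset.filter_filter]
  congr 1
  · apply Finset.sum_congr _ (fun _ _ => rfl)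
    apply Finset.filter_congr
    intro e _
    simp only [Finset.subset_erase]

lemma opt_sliceSum [DecidableEq α] (Q : Finset α) (E : Finset β) (w : β → ℝ)
    (slices : β → Finset α) (N : ℕ) (hN : 1 ≤ N)
    (hcard : ∀ e ∈ E, (slices e).card = N)
    (ρopt : ℝ) (S : Finset α) (hSQ : S ⊆ Q) (hS : S.Nonempty)
    (hdens : density E w slices S = ρopt)
    (hopt₂ : ∀ T ⊆ Q, T.Nonempty → density E w slices T ≤ ρopt)
    {q : α} (hq : q ∈ S) :
    ρopt ≤ sliceSum E w slices S q := by
  have hkpos : 0 < S.card := Finset.card_pos.mpr hS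
  have hmass : mass E w slices S = ρopt * S.card := by
    have := hdens
    unfold density at this
    field_simp at this
    linarith [this]
  rcases eq_or_lt_of_le (Nat.succ_le_of_lt hkpos) with h1 | h2
  · -- S = {q}
    have hSq : S = {q} := by
      rcases Finset.card_eq_one.mp h1.symm with ⟨a, ha⟩
      rw [ha] at hq ⊢
      simp_all
    have : sliceSum E w slices S q = mass E w slices S := by
      unfold sliceSum mass
      apply Finset.sum_congr _ (fun _ _ => rfl)
      apply Finset.filter_congr
      intro e he
      have hne : (slices e).Nonempty := by
        rw [← Finset.card_pos, hcard e he]; omega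
      constructor
      · exact fun h => h.1
      · intro hsub
        refine ⟨hsub, ?_⟩
        obtain ⟨x, hx⟩ := hne
        have := hsub hx
        rw [hSq] at this
        simp at this
        rwa [← this]
    rw [this, hmass, h1.symm]
    simp
  · -- card ≥ 2
    set S' := S.erase q with hS'
    have hcardS' : S'.card = S.card - 1 := Finset.card_erase_of_mem hq
    have hS'ne : S'.Nonempty := by
      rw [← Finset.card_pos, hcardS']; omega
    have hd : density E w slices S' ≤ ρopt :=
      hopt₂ S' ((Finset.erase_subset q S).trans hSQ) hS'ne
    have hm' : mass E w slices S' ≤ ρopt * S'.card := by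
      unfold density at hd
      have hpos : (0 : ℝ) < S'.card := by
        have : 0 < S'.card := Finset.card_pos.mpr hS'ne
        exact_mod_cast this
      rw [div_le_iff₀ hpos] at hd
      linarith
    have hsplit := mass_split E w slices S q
    have hcast : (S'.card : ℝ) = (S.card : ℝ) - 1 := by
      rw [hcardS', Nat.cast_sub (by omega)]
      simp
    rw [hmass] at hsplit
    rw [hcast] at hm'
    nlinarith [hsplit, hm']

theorem dOrdering_good_suffix [DecidableEq α] (Q : Finset α) (E : Finset β) (w : β → ℝ)
    (slices : β → Finset α) (N : ℕ) (hN : 1 ≤ N) (hw : ∀ e, 0 ≤ w e)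
    (hcard : ∀ e ∈ E, (slices e).card = N) (hQ : Q.Nonempty)
    {m : ℕ} (hm : m = Q.card) (π : Fin m → α)
    (hinj : Function.Injective π) (himg : Finset.univ.image π = Q)
    (hD : IsDOrdering E w slices π)
    (ρopt : ℝ)
    (hopt₁ : ∃ S, S ⊆ Q ∧ S.Nonempty ∧ density E w slices S = ρopt)
    (hopt₂ : ∀ S ⊆ Q, S.Nonempty → density E w slices S ≤ ρopt) :
    ∃ j : Fin m, ρopt / N ≤ density E w slices (suffixSet π j) := by
  obtain ⟨S, hSQ, hSne, hSdens⟩ := hopt₁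
  -- index set of S under π
  have hT : (Finset.univ.filter (fun i : Fin m => π i ∈ S)).Nonempty := by
    obtain ⟨q, hq⟩ := hSne
    have : q ∈ Q := hSQ hq
    rw [← himg] at this
    obtain ⟨i, _, hi⟩ := Finset.mem_image.mp this
    exact ⟨i, by simp [hi, hq]⟩
  set j := (Finset.univ.filter (fun i : Fin m => π i ∈ S)).min' hT with hj
  have hjS : π j ∈ S := by
    have := Finset.min'_mem _ hT
    rw [← hj] at this
    exact (Finset.mem_filter.mp this).2
  have hSsub : S ⊆ suffixSet π j := by
    intro q hq
    have : q ∈ Q := hSQ hq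
    rw [← himg] at this
    obtain ⟨i, _, hi⟩ := Finset.mem_image.mp this
    have hji : j ≤ i := Finset.min'_le _ i (by simp [hi, hq])
    exact Finset.mem_image.mpr ⟨i, Finset.mem_filter.mpr ⟨Finset.mem_univ _, hji⟩, hi⟩
  refine ⟨j, ?_⟩
  set Qj := suffixSet π j with hQj
  have hQjsub : Qj ⊆ Q := by
    intro q hq
    obtain ⟨i, _, hi⟩ := Finset.mem_image.mp hq
    rw [← himg]
    exact Finset.mem_image.mpr ⟨i, Finset.mem_univ _, hi⟩
  have hjQj : π j ∈ Qj := hSsub hjS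
  have hQjne : Qj.Nonempty := ⟨π j, hjQj⟩
  have hlow : ∀ r ∈ Qj, ρopt ≤ sliceSum E w slices Qj r := by
    intro r hr
    calc ρopt ≤ sliceSum E w slices S (π j) :=
          opt_sliceSum Q E w slices N hN hcard ρopt S hSQ hSne hSdens hopt₂ hjS
      _ ≤ sliceSum E w slices Qj (π j) := sliceSum_mono E w slices hw hSsub _
      _ ≤ sliceSum E w slices Qj r := hD j r hr
  have hsum : (Qj.card : ℝ) * ρopt ≤ N * mass E w slices Qj := by
    rw [← handshake E w slices N hcard Qj]
    calc (Qj.card : ℝ) * ρopt = ∑ _r ∈ Qj, ρopt := by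
          rw [Finset.sum_const, nsmul_eq_mul]
      _ ≤ ∑ r ∈ Qj, sliceSum E w slices Qj r := Finset.sum_le_sum hlow
  have hNpos : (0 : ℝ) < N := by exact_mod_cast hN
  have hcpos : (0 : ℝ) < Qj.card := by exact_mod_cast Finset.card_pos.mpr hQjne
  unfold density
  rw [div_le_div_iff₀ hNpos hcpos]
  linarith
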